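/- Let d ≥ 2 and n ≥ 1 be integers, let B = {1,…,n}^d ⊆ ℤ^d, and let u ∈ B satisfy 1 ≤ u_i ≤ ⌈n/2⌉ for every coordinate 1 ≤ i ≤ d. Then for every v ∈ B, π_u(v) ≥ (1/(2d))^d · π_u((n, n, …, n)). -/

import Mathlib

/-- A grid walk of length `t` from `v ∈ ℤ^d`: a function on `{0,…,t}` starting at `v`
whose consecutive values differ by exactly `1` in `ℓ¹`-norm. -/
def IsGridWalkD (d : ℕ) (v : Fin d → ℤ) (t : ℕ) (w : Fin (t + 1) → Fin d → ℤ) : Prop :=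
  w 0 = v ∧ ∀ j : Fin t, (∑ k : Fin d, |w j.succ k - w j.castSucc k|) = 1

/-- Membership in the box `B = {1,…,n}^d`. -/
def InBoxD (d n : ℕ) (p : Fin d → ℤ) : Prop :=
  ∀ k : Fin d, 1 ≤ p k ∧ p k ≤ (n : ℤ)

/-- `N_t(v, u)`: the number of grid walks of length `t` from `v` staying in `B \ {u}`
before time `t` and ending at `u` at time `t`. -/
noncomputable def gridHitCountD (d n : ℕ) (v u : Fin d → ℤ) (t : ℕ) : ℕ :=
  {w : Fin (t + 1) → Fin d → ℤ | IsGridWalkD d v t w ∧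
    (∀ j : Fin t, InBoxD d n (w j.castSucc) ∧ w j.castSucc ≠ u) ∧
    w (Fin.last t) = u}.ncard

/-- The potential `π_u(v) = Σ_{t ≥ 0} N_t(v,u) / (2d)^t`. -/
noncomputable def gridPotentialD (d n : ℕ) (u v : Fin d → ℤ) : ℝ :=
  ∑' t : ℕ, (gridHitCountD d n v u t : ℝ) / (2 * d) ^ t

open Function Set
open scoped ENNReal

namespace GridPf

noncomputable section

abbrev V (d : ℕ) := Fin d → ℤ

def dist1 {d : ℕ} (p r : V d) : ℤ := ∑ k, |p k - r k|

def InB (d n : ℕ) (p : V d) : Prop := ∀ k, 1 ≤ p k ∧ p k ≤ (n : ℤ)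

/-- frozen-tail walk on ℕ indices -/
structure IsW (d : ℕ) (x : V d) (t : ℕ) (w : ℕ → V d) : Prop where
  start : w 0 = x
  step : ∀ s, s < t → dist1 (w (s+1)) (w s) = 1
  frozen : ∀ s, t ≤ s → w s = w t

def Cted (d n : ℕ) (u x : V d) (t : ℕ) (w : ℕ → V d) : Prop :=
  IsW d x t w ∧ (∀ s, s < t → InB d n (w s) ∧ w s ≠ u) ∧ w t = u

def CS (d n : ℕ) (u x : V d) (t : ℕ) : Set (ℕ → V d) := {w | Cted d n u x t w}

def NN (d n : ℕ) (u x : V d) (t : ℕ) : ℕ := (CS d n u x t).ncard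

def q (d : ℕ) : ℝ≥0∞ := (((2 * d : ℕ) : ℝ≥0∞))⁻¹

def pi' (d n : ℕ) (u x : V d) : ℝ≥0∞ := ∑' t, (NN d n u x t : ℝ≥0∞) * (q d) ^ t

/-- alive walks -/
def AS (d n : ℕ) (u x : V d) (s : ℕ) : Set (ℕ → V d) :=
  {w | IsW d x s w ∧ ∀ j, j ≤ s → InB d n (w j) ∧ w j ≠ u}

def RR (d n : ℕ) (u x : V d) (s : ℕ) : ℕ := (AS d n u x s).ncard

variable {d n : ℕ}

lemma dist1_comm (p r : V d) : dist1 p r = dist1 r p := by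
  unfold dist1; exact Finset.sum_congr rfl fun k _ => abs_sub_comm _ _

lemma coord_le_dist1 (p r : V d) (k : Fin d) : |p k - r k| ≤ dist1 p r := by
  unfold dist1
  exact Finset.single_le_sum (f := fun i => |p i - r i|) (fun i _ => abs_nonneg _) (Finset.mem_univ k)

lemma IsW.coordLip {x : V d} {t : ℕ} {w : ℕ → V d} (hw : IsW d x t w) (s : ℕ) (k : Fin d) :
    |w (s+1) k - w s k| ≤ 1 := by
  by_cases hs : s < t
  · exact (coord_le_dist1 _ _ k).trans_eq (hw.step s hs)
  · push_neg at hs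
    rw [hw.frozen s hs, hw.frozen (s+1) (by omega)]
    simp

/-- the box set of walks, used for finiteness -/
lemma finite_box_walks (t : ℕ) :
    (Set.univ.pi (fun _ : Fin (t+1) => Set.univ.pi (fun _ : Fin d => Set.Icc (1:ℤ) (n:ℤ)))).Finite :=
  Set.Finite.pi (fun _ => Set.Finite.pi (fun _ => Set.finite_Icc _ _))

lemma CS_finite (hu : InB d n u) (x : V d) (t : ℕ) : (CS d n u x t).Finite := by
  apply Set.Finite.of_finite_image (f := fun (w : ℕ → V d) (i : Fin (t+1)) => w i)
  · apply (finite_box_walks (d := d) (n := n) t).subset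
    rintro - ⟨w, hw, rfl⟩
    intro i _
    intro k _
    obtain ⟨hw1, hw2, hw3⟩ := hw
    simp only [Set.mem_Icc]
    rcases lt_or_eq_of_le (Nat.lt_succ_iff.mp i.2) with hi | hi
    · exact (hw2 i hi).1 k
    · have : w (i : ℕ) = u := by rw [hi, hw3]
      rw [this]; exact hu k
  · intro w1 h1 w2 h2 h
    funext s
    by_cases hs : s ≤ t
    · have := congrFun h ⟨s, by omega⟩; simpa using this
    · push_neg at hs
      rw [h1.1.frozen s (by omega), h2.1.frozen s (by omega)]
      have := congrFun h ⟨t, by omega⟩; simpa using this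

lemma AS_finite (x : V d) (s : ℕ) : (AS d n u x s).Finite := by
  apply Set.Finite.of_finite_image (f := fun (w : ℕ → V d) (i : Fin (s+1)) => w i)
  · apply (finite_box_walks (d := d) (n := n) s).subset
    rintro - ⟨w, hw, rfl⟩
    intro i _
    intro k _
    have := (hw.2 i (Nat.lt_succ_iff.mp i.2)).1 k
    simpa [Set.mem_Icc] using this
  · intro w1 h1 w2 h2 h
    funext j
    by_cases hj : j ≤ s
    · have := congrFun h ⟨j, by omega⟩; simpa using this
    · push_neg at hj
      rw [h1.1.frozen j (by omega), h2.1.frozen j (by omega)]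
      have := congrFun h ⟨s, by omega⟩; simpa using this

lemma ncard_prod {α β : Type*} (s : Set α) (t : Set β) :
    (s ×ˢ t).ncard = s.ncard * t.ncard := by
  rw [← Nat.card_coe_set_eq, ← Nat.card_coe_set_eq, ← Nat.card_coe_set_eq,
    Nat.card_congr (Equiv.Set.prod s t), Nat.card_prod]

lemma ncard_biUnion_le {α ι : Type*} (s : Finset ι) (t : ι → Set α)
    (ht : ∀ i ∈ s, (t i).Finite) :
    (⋃ i ∈ s, t i).ncard ≤ ∑ i ∈ s, (t i).ncard := by
  classical
  induction s using Finset.cons_induction with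
  | empty => simp
  | cons a s' hx ih =>
    rw [Finset.sum_cons]
    refine le_trans ?_ (add_le_add_right (ih (fun i hi => ht i (Finset.mem_cons_of_mem hi))) _)
    rw [show (⋃ i ∈ Finset.cons a s' hx, t i) = t a ∪ ⋃ i ∈ s', t i by simp]
    exact Set.ncard_union_le _ _

lemma tsum_le_of_partial {f : ℕ → ℝ≥0∞} {c : ℝ≥0∞} (h : ∀ M, ∑ t ∈ Finset.range M, f t ≤ c) :
    ∑' t, f t ≤ c := by
  rw [ENNReal.tsum_eq_iSup_sum]
  refine iSup_le fun s => ?_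
  rcases s.eq_empty_or_nonempty with rfl | hs
  · simpa using (h 0)
  · refine le_trans (Finset.sum_le_sum_of_subset ?_) (h (s.max' hs + 1))
    intro i hi
    simp only [Finset.mem_range]
    exact Nat.lt_succ_of_le (s.le_max' i hi)

def DS (d : ℕ) : Set (V d) := {δ | ∑ k, |δ k| = 1}

def emb (d : ℕ) : Fin d × Bool → V d :=
  fun p => fun j => if j = p.1 then (if p.2 then 1 else -1) else 0

lemma emb_inj : Function.Injective (emb d) := by
  rintro ⟨i, b⟩ ⟨i', b'⟩ h
  have hi := congrFun h i
  simp only [emb] at hi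
  by_cases hii : i = i'
  · subst hii
    simp only [if_pos rfl] at hi
    cases b <;> cases b' <;> simp_all
  · rw [if_neg hii] at hi
    simp only [if_true] at hi
    cases b <;> simp at hi

lemma DS_eq : DS d = emb d '' Set.univ := by
  ext δ
  simp only [DS, Set.mem_setOf_eq, Set.image_univ, Set.mem_range]
  constructor
  · intro hδ
    have hne : ∃ k₀, δ k₀ ≠ 0 := by
      by_contra h
      push_neg at h
      simp only [Finset.sum_congr, h] at hδ
      simp at hδ
    obtain ⟨k₀, hk₀⟩ := hne
    have h1 : 1 ≤ |δ k₀| := by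
      rcases abs_pos.mpr hk₀ with h; omega
    have hsum : |δ k₀| + ∑ k ∈ Finset.univ.erase k₀, |δ k| = 1 := by
      rw [Finset.add_sum_erase _ (fun k => |δ k|) (Finset.mem_univ k₀)]
      exact hδ
    have hrest : ∑ k ∈ Finset.univ.erase k₀, |δ k| = 0 := by
      have : (0:ℤ) ≤ ∑ k ∈ Finset.univ.erase k₀, |δ k| :=
        Finset.sum_nonneg fun i _ => abs_nonneg _
      omega
    have habs : |δ k₀| = 1 := by omega
    have hzero : ∀ k, k ≠ k₀ → δ k = 0 := by
      intro k hk
      have := (Finset.sum_eq_zero_iff_of_nonneg (fun i _ => abs_nonneg (δ i))).mp hrest k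
        (Finset.mem_erase.mpr ⟨hk, Finset.mem_univ _⟩)
      exact abs_eq_zero.mp this
    refine ⟨⟨k₀, δ k₀ = 1⟩, ?_⟩
    funext j
    simp only [emb]
    by_cases hj : j = k₀
    · subst hj
      rcases abs_eq (by norm_num : (0:ℤ) ≤ 1) |>.mp habs with h | h <;> simp [h]
    · simp [hj, hzero j hj]
  · rintro ⟨⟨i, b⟩, rfl⟩
    rw [Finset.sum_eq_single i]
    · simp only [emb, if_pos rfl]; cases b <;> norm_num
    · intro k _ hk; simp [emb, hk]
    · intro h; exact absurd (Finset.mem_univ i) h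

lemma DS_finite : (DS d).Finite := by
  rw [DS_eq]; exact (Set.finite_univ).image _

lemma DS_ncard : (DS d).ncard = 2 * d := by
  rw [DS_eq, Set.image_univ, ← Nat.card_coe_set_eq,
    Nat.card_range_of_injective emb_inj]
  simp [Nat.card_prod, Nat.card_eq_fintype_card, mul_comm]


variable {u x : V d}

lemma q_mul (hd : 0 < d) : (2 * (d:ℝ≥0∞)) * q d = 1 := by
  have h1 : ((2 * d : ℕ) : ℝ≥0∞) = 2 * (d:ℝ≥0∞) := by push_cast; ring
  rw [← h1, q]
  refine ENNReal.mul_inv_cancel ?_ ?_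
  · simp only [ne_eq, Nat.cast_eq_zero]; omega
  · exact ENNReal.natCast_ne_top _

lemma CS_zero_self (u : V d) : CS d n u u 0 = {fun _ => u} := by
  ext w
  simp only [CS, Cted, Set.mem_setOf_eq, Set.mem_singleton_iff]
  constructor
  · rintro ⟨hW, -, hend⟩
    funext s
    rw [hW.frozen s (Nat.zero_le s), hend]
  · rintro rfl
    exact ⟨⟨rfl, fun s hs => absurd hs (Nat.not_lt_zero s), fun s _ => rfl⟩,
      fun s hs => absurd hs (Nat.not_lt_zero s), rfl⟩

lemma NN_zero_self (u : V d) : NN d n u u 0 = 1 := by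
  rw [NN, CS_zero_self, Set.ncard_singleton]

lemma NN_pos_self (t : ℕ) (ht : 0 < t) : NN d n u u t = 0 := by
  have hE : CS d n u u t = ∅ := by
    rw [Set.eq_empty_iff_forall_notMem]
    rintro w ⟨hW, hc, -⟩
    exact (hc 0 ht).2 hW.start
  rw [NN, hE, Set.ncard_empty]

lemma NN_zero_ne (h : x ≠ u) : NN d n u x 0 = 0 := by
  have hE : CS d n u x 0 = ∅ := by
    rw [Set.eq_empty_iff_forall_notMem]
    rintro w ⟨hW, -, hend⟩
    rw [← hW.start] at h
    exact h hend
  rw [NN, hE, Set.ncard_empty]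

lemma NN_notinB (hu : InB d n u) (hx : ¬ InB d n x) (t : ℕ) : NN d n u x t = 0 := by
  rcases Nat.eq_zero_or_pos t with rfl | ht
  · exact NN_zero_ne (fun h => hx (h ▸ hu))
  · have hE : CS d n u x t = ∅ := by
      rw [Set.eq_empty_iff_forall_notMem]
      rintro w ⟨hW, hc, -⟩
      exact hx (hW.start ▸ (hc 0 ht).1)
    rw [NN, hE, Set.ncard_empty]

lemma RR_zero (hx : InB d n x) (hxu : x ≠ u) : RR d n u x 0 = 1 := by
  rw [RR]
  have : AS d n u x 0 = {fun _ => x} := by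
    ext w
    simp only [AS, Set.mem_setOf_eq, Set.mem_singleton_iff]
    constructor
    · rintro ⟨hW, -⟩
      funext s
      rw [hW.frozen s (Nat.zero_le s), hW.start]
    · rintro rfl
      refine ⟨⟨rfl, fun s hs => absurd hs (Nat.not_lt_zero s), fun s _ => rfl⟩, ?_⟩
      intro j hj
      exact ⟨hx, hxu⟩
  rw [this, Set.ncard_singleton]

lemma pi'_self (hd : 0 < d) (u : V d) : pi' d n u u = 1 := by
  rw [pi', tsum_eq_single 0]
  · simp [NN_zero_self]
  · intro t ht
    rw [NN_pos_self t (Nat.pos_of_ne_zero ht)]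
    simp

lemma key_count (hu : InB d n u) (x : V d) (s : ℕ) :
    NN d n u x (s+1) + RR d n u x (s+1) ≤ 2 * d * RR d n u x s := by
  classical
  have hdisj : Disjoint (CS d n u x (s+1)) (AS d n u x (s+1)) := by
    rw [Set.disjoint_left]
    rintro w ⟨-, -, hend⟩ ⟨-, hcond⟩
    exact (hcond (s+1) le_rfl).2 hend
  have hfin1 := CS_finite hu x (s+1)
  have hfin2 := AS_finite (n := n) (u := u) x (s+1)
  have hIsW : ∀ w ∈ CS d n u x (s+1) ∪ AS d n u x (s+1), IsW d x (s+1) w := by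
    rintro w (⟨h, -, -⟩ | ⟨h, -⟩) <;> exact h
  have hbox : ∀ w ∈ CS d n u x (s+1) ∪ AS d n u x (s+1),
      ∀ j, j ≤ s → InB d n (w j) ∧ w j ≠ u := by
    rintro w (⟨-, hc, -⟩ | ⟨-, hc⟩) j hj
    · exact hc j (by omega)
    · exact hc j (by omega)
  have target_fin : ((AS d n u x s) ×ˢ (DS d)).Finite := (AS_finite x s).prod DS_finite
  set F : (ℕ → V d) → (ℕ → V d) × V d :=
    fun w => ((fun i => w (min i s) : ℕ → V d), (fun k => w (s+1) k - w s k : V d)) with hF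
  have hmaps : ∀ w ∈ CS d n u x (s+1) ∪ AS d n u x (s+1), F w ∈ (AS d n u x s) ×ˢ (DS d) := by
    intro w hw
    have hW := hIsW w hw
    have hb := hbox w hw
    rw [Set.mem_prod]
    constructor
    · refine ⟨⟨?_, ?_, ?_⟩, ?_⟩
      · show w (min 0 s) = x
        simp [hW.start]
      · intro j hj
        show dist1 (w (min (j+1) s)) (w (min j s)) = 1
        rw [min_eq_left (by omega : j ≤ s), min_eq_left (by omega : j + 1 ≤ s)]
        exact hW.step j (by omega)
      · intro j hj
        show w (min j s) = w (min s s)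
        rw [min_eq_right hj, min_self]
      · intro j hj
        show InB d n (w (min j s)) ∧ w (min j s) ≠ u
        rw [min_eq_left hj]
        exact hb j hj
    · show (∑ k, |w (s+1) k - w s k|) = 1
      exact hW.step s (by omega)
  have hinj : Set.InjOn F (CS d n u x (s+1) ∪ AS d n u x (s+1)) := by
    intro w1 h1 w2 h2 heq
    have heq1 : (fun i => w1 (min i s) : ℕ → V d) = fun i => w2 (min i s) :=
      congrArg Prod.fst heq
    have heq2 : (fun k => w1 (s+1) k - w1 s k : V d) = fun k => w2 (s+1) k - w2 s k :=
      congrArg Prod.snd heq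
    have hW1 := hIsW w1 h1
    have hW2 := hIsW w2 h2
    have hlow : ∀ j, j ≤ s → w1 j = w2 j := by
      intro j hj
      have := congrFun heq1 j
      simpa [min_eq_left hj] using this
    have hs1 : w1 (s+1) = w2 (s+1) := by
      funext k
      have h2' := congrFun heq2 k
      have h3 := congrFun (hlow s le_rfl) k
      omega
    funext j
    rcases le_or_gt j s with hj | hj
    · exact hlow j hj
    · rcases Nat.eq_or_lt_of_le hj with hj' | hj'
      · rw [← hj']; exact hs1
      · rw [hW1.frozen j (by omega), hW2.frozen j (by omega)]
        exact hs1
  have hle : (CS d n u x (s+1) ∪ AS d n u x (s+1)).ncard ≤ ((AS d n u x s) ×ˢ (DS d)).ncard :=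
    Set.ncard_le_ncard_of_injOn F hmaps hinj target_fin
  rw [NN, RR, ← Set.ncard_union_eq hdisj hfin1 hfin2]
  refine hle.trans ?_
  rw [ncard_prod, DS_ncard, ← RR]
  ring_nf
  exact le_rfl

lemma mass_aux (hd : 0 < d) (hu : InB d n u) (hx : InB d n x) (hxu : x ≠ u) :
    ∀ M, (∑ t ∈ Finset.range (M+1), (NN d n u x t : ℝ≥0∞) * q d ^ t)
      + (RR d n u x M : ℝ≥0∞) * q d ^ M ≤ 1 := by
  intro M
  induction M with
  | zero => simp [NN_zero_ne hxu, RR_zero hx hxu]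
  | succ M ih =>
    have hkey : ((NN d n u x (M+1) : ℝ≥0∞)) * q d ^ (M+1)
        + (RR d n u x (M+1) : ℝ≥0∞) * q d ^ (M+1) ≤ (RR d n u x M : ℝ≥0∞) * q d ^ M := by
      rw [← add_mul]
      have hc : ((NN d n u x (M+1) : ℝ≥0∞) + (RR d n u x (M+1) : ℝ≥0∞))
          ≤ ((2 * d * RR d n u x M : ℕ) : ℝ≥0∞) := by
        rw [← Nat.cast_add]
        exact_mod_cast (key_count hu x M)
      refine le_trans (mul_le_mul_left hc _) ?_
      rw [pow_succ]
      push_cast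
      refine le_of_eq ?_
      calc (2 * (d:ℝ≥0∞) * (RR d n u x M : ℝ≥0∞)) * (q d ^ M * q d)
          = ((RR d n u x M : ℝ≥0∞) * q d ^ M) * ((2 * (d:ℝ≥0∞)) * q d) := by ring
        _ = (RR d n u x M : ℝ≥0∞) * q d ^ M := by rw [q_mul hd, mul_one]
    calc (∑ t ∈ Finset.range (M+1+1), (NN d n u x t : ℝ≥0∞) * q d ^ t)
          + (RR d n u x (M+1) : ℝ≥0∞) * q d ^ (M+1)
        = (∑ t ∈ Finset.range (M+1), (NN d n u x t : ℝ≥0∞) * q d ^ t)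
          + ((NN d n u x (M+1) : ℝ≥0∞) * q d ^ (M+1)
            + (RR d n u x (M+1) : ℝ≥0∞) * q d ^ (M+1)) := by
          rw [Finset.sum_range_succ]; ring
      _ ≤ (∑ t ∈ Finset.range (M+1), (NN d n u x t : ℝ≥0∞) * q d ^ t)
          + (RR d n u x M : ℝ≥0∞) * q d ^ M := add_le_add_right hkey _
      _ ≤ 1 := ih

lemma pi'_le_one (hd : 0 < d) (hu : InB d n u) (x : V d) : pi' d n u x ≤ 1 := by
  by_cases hxu : x = u
  · subst hxu; rw [pi'_self hd]
  by_cases hx : InB d n x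
  · rw [pi']
    apply tsum_le_of_partial
    intro M
    cases M with
    | zero => simp
    | succ M =>
      refine le_trans ?_ (mass_aux hd hu hx hxu M)
      exact le_add_right le_rfl
  · rw [pi']
    have : ∀ t, (NN d n u x t : ℝ≥0∞) * q d ^ t = 0 := by
      intro t; rw [NN_notinB hu hx]; simp
    rw [tsum_congr this]
    simp


lemma step_count (hu : InB d n u) (hx : InB d n x) (hxu : x ≠ u) (x' : V d)
    (hdist : dist1 x x' = 1) (t : ℕ) :
    NN d n u x' t ≤ NN d n u x (t+1) := by
  classical
  set P : (ℕ → V d) → (ℕ → V d) := fun w s => if s = 0 then x else w (s-1) with hP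
  have hmaps : ∀ w ∈ CS d n u x' t, P w ∈ CS d n u x (t+1) := by
    rintro w ⟨hW, hc, he⟩
    refine ⟨⟨?_, ?_, ?_⟩, ?_, ?_⟩
    · show (if 0 = 0 then x else _) = x
      simp
    · intro s hs
      rcases Nat.eq_zero_or_pos s with rfl | hs0
      · show dist1 (if 1 = 0 then x else w 0) (if 0 = 0 then x else _) = 1
        simp only [if_neg one_ne_zero, if_pos rfl]
        rw [hW.start, dist1_comm]
        exact hdist
      · obtain ⟨r, rfl⟩ := Nat.exists_eq_add_of_le hs0
        show dist1 (if 1 + r + 1 = 0 then x else w (1 + r + 1 - 1)) (if 1 + r = 0 then x else w (1 + r - 1)) = 1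
        rw [if_neg (by omega), if_neg (by omega)]
        have : 1 + r + 1 - 1 = r + 1 := by omega
        rw [this, show 1 + r - 1 = r by omega]
        exact hW.step r (by omega)
    · intro s hs
      show (if s = 0 then x else w (s-1)) = (if t + 1 = 0 then x else w (t+1-1))
      rw [if_neg (by omega), if_neg (by omega)]
      rw [show t + 1 - 1 = t by omega, hW.frozen (s-1) (by omega)]
    · intro j hj
      rcases Nat.eq_zero_or_pos j with rfl | hj0
      · show InB d n (if 0 = 0 then x else _) ∧ (if 0 = 0 then x else _) ≠ u
        simp only [if_pos rfl]
        exact ⟨hx, hxu⟩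
      · show InB d n (if j = 0 then x else w (j-1)) ∧ (if j = 0 then x else w (j-1)) ≠ u
        rw [if_neg (by omega)]
        exact hc (j-1) (by omega)
    · show (if t + 1 = 0 then x else w (t+1-1)) = u
      rw [if_neg (by omega), show t + 1 - 1 = t by omega]
      exact he
  have hinj : Set.InjOn P (CS d n u x' t) := by
    intro w1 h1 w2 h2 heq
    funext s
    have := congrFun heq (s+1)
    simpa [hP] using this
  exact Set.ncard_le_ncard_of_injOn P hmaps hinj (CS_finite hu x (t+1))

lemma step_pi' (hu : InB d n u) (hx : InB d n x) (hxu : x ≠ u) (x' : V d)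
    (hdist : dist1 x x' = 1) : q d * pi' d n u x' ≤ pi' d n u x := by
  rw [pi', pi', ← ENNReal.tsum_mul_left]
  have h1 : ∀ t, q d * ((NN d n u x' t : ℝ≥0∞) * q d ^ t)
      ≤ (NN d n u x (t+1) : ℝ≥0∞) * q d ^ (t+1) := by
    intro t
    rw [pow_succ]
    calc q d * ((NN d n u x' t : ℝ≥0∞) * q d ^ t)
        = (NN d n u x' t : ℝ≥0∞) * (q d ^ t * q d) := by ring
      _ ≤ (NN d n u x (t+1) : ℝ≥0∞) * (q d ^ t * q d) := by
          exact mul_le_mul_left (by exact_mod_cast step_count hu hx hxu x' hdist t) _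
  refine le_trans (ENNReal.tsum_le_tsum h1) ?_
  exact ENNReal.tsum_comp_le_tsum_of_injective Nat.succ_injective
    (fun t => (NN d n u x t : ℝ≥0∞) * q d ^ t)


/-! ### Cauchy product bound -/

lemma tsum_cauchy_le (a b : ℕ → ℝ≥0∞) :
    ∑' t, (∑ S ∈ Finset.range t, a S * b (t - S)) ≤ (∑' S, a S) * (∑' r, b r) := by
  apply tsum_le_of_partial
  intro M
  have h1 : ∀ t, (∑ S ∈ Finset.range t, a S * b (t - S))
      ≤ ∑ p ∈ Finset.HasAntidiagonal.antidiagonal t, a p.1 * b p.2 := by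
    intro t
    rw [Finset.Nat.sum_antidiagonal_eq_sum_range_succ_mk]
    exact Finset.sum_le_sum_of_subset (Finset.range_subset_range.mpr (by omega))
  refine le_trans (Finset.sum_le_sum fun t _ => h1 t) ?_
  have hdisj : (↑(Finset.range M) : Set ℕ).PairwiseDisjoint Finset.HasAntidiagonal.antidiagonal := by
    intro t1 _ t2 _ hne
    simp only [Finset.disjoint_left]
    intro p hp1 hp2
    rw [Finset.HasAntidiagonal.mem_antidiagonal] at hp1 hp2
    exact hne (hp1 ▸ hp2)
  rw [← Finset.sum_biUnion hdisj]
  have hsub : (Finset.range M).biUnion Finset.HasAntidiagonal.antidiagonal ⊆ Finset.range M ×ˢ Finset.range M := by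
    intro p hp
    simp only [Finset.mem_biUnion] at hp
    obtain ⟨t, ht, hpt⟩ := hp
    rw [Finset.HasAntidiagonal.mem_antidiagonal] at hpt
    rw [Finset.mem_product, Finset.mem_range, Finset.mem_range]
    rw [Finset.mem_range] at ht
    omega
  refine le_trans (Finset.sum_le_sum_of_subset hsub) ?_
  rw [Finset.sum_product, ← Finset.sum_mul_sum]
  exact mul_le_mul' (ENNReal.sum_le_tsum _) (ENNReal.sum_le_tsum _)

/-! ### Reflection map -/

def rr (k : Fin d) (m : ℤ) (p : V d) : V d := Function.update p k (2*m - p k)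

variable {k : Fin d} {m : ℤ} {p r : V d}

lemma rr_k (p : V d) : rr k m p k = 2*m - p k := by simp [rr]

lemma rr_ne {j : Fin d} (h : j ≠ k) (p : V d) : rr k m p j = p j := by
  simp [rr, Function.update_of_ne h]

lemma rr_invol (p : V d) : rr k m (rr k m p) = p := by
  funext j
  by_cases hj : j = k
  · subst hj; rw [rr_k, rr_k]; ring
  · rw [rr_ne hj, rr_ne hj]

lemma rr_inj : Function.Injective (rr k m) := by
  intro p r h
  have := congrArg (rr k m) h
  rwa [rr_invol, rr_invol] at this

lemma rr_fix (h : p k = m) : rr k m p = p := by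
  funext j
  by_cases hj : j = k
  · subst hj; rw [rr_k, h]; omega
  · rw [rr_ne hj]

lemma dist1_rr (p r : V d) : dist1 (rr k m p) (rr k m r) = dist1 p r := by
  unfold dist1
  refine Finset.sum_congr rfl fun j _ => ?_
  by_cases hj : j = k
  · subst hj; rw [rr_k, rr_k]
    rw [show 2*m - p j - (2*m - r j) = -(p j - r j) by ring, abs_neg]
  · rw [rr_ne hj, rr_ne hj]

lemma InB_rr {n : ℕ} (hp : InB d n p) (hhigh : m < p k) (ha1 : 1 ≤ 2*m - (n:ℤ))
    (hmn : m < (n:ℤ)) : InB d n (rr k m p) := by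
  intro j
  by_cases hj : j = k
  · subst hj
    rw [rr_k]
    have h1 := (hp j).1
    have h2 := (hp j).2
    constructor <;> omega
  · rw [rr_ne hj]; exact hp j

/-! ### stay-high and touch existence -/

lemma stay_high {n t : ℕ} {z : V d} {w : ℕ → V d} (hW : IsW d z t w)
    (hzk : z k = (n:ℤ)) (hmn : m < (n:ℤ)) :
    ∀ s, (∀ j, j ≤ s → w j k ≠ m) → m < w s k := by
  intro s
  induction s with
  | zero =>
    intro _
    rw [hW.start, hzk]
    exact hmn
  | succ s ih =>
    intro h
    have h1 := ih (fun j hj => h j (by omega))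
    have h2 := (abs_le.mp (hW.coordLip s k)).1
    have h3 := h (s+1) le_rfl
    omega

lemma touch_exists {n t : ℕ} {u z : V d} {w : ℕ → V d} (hw : Cted d n u z t w)
    (hzk : z k = (n:ℤ)) (hmn : m < (n:ℤ)) (huk : u k ≤ m) :
    ∃ s, w s k = m := by
  by_contra h
  push_neg at h
  have := stay_high hw.1 hzk hmn t (fun j _ => h j)
  rw [hw.2.2] at this
  omega


/-! ### Touch / NoTouch sets -/

def Tw (k : Fin d) (m : ℤ) (w : ℕ → V d) : ℕ := sInf {s | w s k = m}

def TouchS (d n : ℕ) (u w0 : V d) (k : Fin d) (m : ℤ) (t : ℕ) : Set (ℕ → V d) :=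
  {w | w ∈ CS d n u w0 t ∧ ∃ s, w s k = m}

def NoTouchS (d n : ℕ) (u w0 : V d) (k : Fin d) (m : ℤ) (t : ℕ) : Set (ℕ → V d) :=
  {w | w ∈ CS d n u w0 t ∧ ∀ s, w s k ≠ m}

def Bc (u : V d) (k : Fin d) (m : ℤ) (w : ℕ → V d) : Prop :=
  ∃ s, w s = rr k m u ∧ ∀ j, j ≤ s → w j k ≠ m

lemma CS_partition_touch {u : V d} (hu : InB d n u) (w0 : V d) (t : ℕ) :
    NN d n u w0 t = (TouchS d n u w0 k m t).ncard + (NoTouchS d n u w0 k m t).ncard := by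
  classical
  have hsplit : CS d n u w0 t = TouchS d n u w0 k m t ∪ NoTouchS d n u w0 k m t := by
    ext w
    simp only [TouchS, NoTouchS, Set.mem_union, Set.mem_setOf_eq]
    by_cases h : ∃ s, w s k = m
    · tauto
    · push_neg at h; tauto
  have hdisj : Disjoint (TouchS d n u w0 k m t) (NoTouchS d n u w0 k m t) := by
    rw [Set.disjoint_left]
    rintro w ⟨-, s, hs⟩ ⟨-, hns⟩
    exact hns s hs
  have hf1 : (TouchS d n u w0 k m t).Finite :=
    (CS_finite hu w0 t).subset (fun w hw => hw.1)
  have hf2 : (NoTouchS d n u w0 k m t).Finite :=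
    (CS_finite hu w0 t).subset (fun w hw => hw.1)
  rw [NN, hsplit, Set.ncard_union_eq hdisj hf1 hf2]

section Classes

variable {u z : V d} (hu : InB d n u) (huk : u k ≤ m) (hz : InB d n z)
  (hzk : z k = (n:ℤ)) (ha1 : 1 ≤ 2*m - (n:ℤ)) (hmn : m < (n:ℤ))

include hu huk hz hzk ha1 hmn in
lemma classA_le (hzstar : z ≠ rr k m u) (t : ℕ) :
    {w ∈ CS d n u z t | ¬ Bc u k m w}.ncard ≤ (TouchS d n u (rr k m z) k m t).ncard := by
  classical
  set Φ : (ℕ → V d) → (ℕ → V d) := fun w i => if i ≤ Tw k m w then rr k m (w i) else w i with hΦdef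
  have basic : ∀ w, Cted d n u z t w →
      w (Tw k m w) k = m ∧ (∀ s, s < Tw k m w → m < w s k) ∧ Tw k m w ≤ t := by
    intro w hw
    have hex : ∃ s, w s k = m := touch_exists hw hzk hmn huk
    have hTm : w (Tw k m w) k = m := Nat.sInf_mem hex
    have hTmin : ∀ s, s < Tw k m w → w s k ≠ m := by
      intro s hs
      exact Nat.notMem_of_lt_sInf hs
    have hhigh : ∀ s, s < Tw k m w → m < w s k := by
      intro s hs
      exact stay_high hw.1 hzk hmn s (fun j hj => hTmin j (lt_of_le_of_lt hj hs))
    refine ⟨hTm, hhigh, ?_⟩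
    by_contra ht
    push_neg at ht
    have := hhigh t ht
    rw [hw.2.2] at this
    omega
  have hval : ∀ w, Cted d n u z t w → (∀ i, i ≤ Tw k m w → Φ w i = rr k m (w i)) ∧
      (∀ i, Tw k m w ≤ i → Φ w i = w i) := by
    intro w hw
    obtain ⟨hTm, -, -⟩ := basic w hw
    constructor
    · intro i hi; simp only [hΦdef, if_pos hi]
    · intro i hi
      rcases Nat.eq_or_lt_of_le hi with hi' | hi'
      · simp only [hΦdef, ← hi', if_pos le_rfl]
        exact rr_fix hTm
      · simp only [hΦdef, if_neg (by omega : ¬ i ≤ Tw k m w)]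
  have hmaps : ∀ w ∈ {w ∈ CS d n u z t | ¬ Bc u k m w},
      Φ w ∈ TouchS d n u (rr k m z) k m t := by
    rintro w ⟨hw, hnB⟩
    obtain ⟨hTm, hhigh, hTle⟩ := basic w hw
    obtain ⟨hv1, hv2⟩ := hval w hw
    obtain ⟨hW, hc, he⟩ := hw
    refine ⟨⟨⟨?_, ?_, ?_⟩, ?_, ?_⟩, ?_⟩
    · rw [hv1 0 (Nat.zero_le _), hW.start]
    · intro s hs
      rcases Nat.lt_or_ge s (Tw k m w) with hsT | hsT
      · rw [hv1 s (by omega), hv1 (s+1) (by omega), dist1_rr]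
        exact hW.step s hs
      · rw [hv2 s hsT, hv2 (s+1) (by omega)]
        exact hW.step s hs
    · intro s hs
      rw [hv2 s (by omega), hv2 t hTle, hW.frozen s hs]
    · intro s hs
      rcases Nat.lt_or_ge s (Tw k m w) with hsT | hsT
      · rw [hv1 s (by omega)]
        constructor
        · exact InB_rr (hc s hs).1 (hhigh s hsT) ha1 hmn
        · intro hequ
          apply hnB
          refine ⟨s, ?_, ?_⟩
          · rw [← hequ, rr_invol]
          · intro j hj
            have := hhigh j (by omega)
            omega
      · rw [hv2 s hsT]
        exact hc s hs
    · rw [hv2 t hTle, he]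
    · refine ⟨Tw k m w, ?_⟩
      rw [hv2 _ le_rfl, hTm]
  have hinj : Set.InjOn Φ {w ∈ CS d n u z t | ¬ Bc u k m w} := by
    rintro w1 ⟨hw1, -⟩ w2 ⟨hw2, -⟩ heq
    have hsets : ∀ w, Cted d n u z t w → ∀ s, (Φ w s) k = m ↔ w s k = m := by
      intro w hw s
      obtain ⟨hv1, hv2⟩ := hval w hw
      rcases le_or_gt s (Tw k m w) with hs | hs
      · rw [hv1 s hs, rr_k]
        omega
      · rw [hv2 s (by omega)]
    have hT12 : Tw k m w1 = Tw k m w2 := by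
      have e1 : {s | w1 s k = m} = {s | (Φ w1 s) k = m} := by
        ext s; exact (hsets w1 hw1 s).symm
      have e2 : {s | w2 s k = m} = {s | (Φ w2 s) k = m} := by
        ext s; exact (hsets w2 hw2 s).symm
      rw [Tw, Tw, e1, e2, heq]
    funext i
    have h1 := congrFun heq i
    obtain ⟨hv11, hv12⟩ := hval w1 hw1
    obtain ⟨hv21, hv22⟩ := hval w2 hw2
    rcases le_or_gt i (Tw k m w1) with hi | hi
    · rw [hv11 i hi, hv21 i (by omega : i ≤ Tw k m w2)] at h1
      exact rr_inj h1
    · rw [hv12 i (by omega), hv22 i (by omega : Tw k m w2 ≤ i)] at h1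
      exact h1
  exact Set.ncard_le_ncard_of_injOn Φ hmaps hinj
    ((CS_finite hu (rr k m z) t).subset (fun w hw => hw.1))


include hu huk hz hzk ha1 hmn in
lemma classB_le (t : ℕ) :
    {w ∈ CS d n u z t | Bc u k m w}.ncard
      ≤ ∑ S ∈ Finset.range t,
          (NoTouchS d n u (rr k m z) k m S).ncard * NN d n u (rr k m u) (t - S) := by
  classical
  set ustar := rr k m u with hustar
  set Sw : (ℕ → V d) → ℕ := fun w => sInf {s | w s = ustar} with hSw
  -- basic facts about members of class B
  have basic : ∀ w, Cted d n u z t w → Bc u k m w →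
      w (Sw w) = ustar ∧ (∀ j, j < Sw w → w j ≠ ustar) ∧ (∀ j, j ≤ Sw w → w j k ≠ m)
        ∧ (∀ j, j ≤ Sw w → m < w j k) ∧ Sw w < t := by
    intro w hw hB
    obtain ⟨s₀, hs₀u, hs₀nt⟩ := hB
    have hex : ∃ s, w s = ustar := ⟨s₀, hs₀u⟩
    have hSu : w (Sw w) = ustar := Nat.sInf_mem hex
    have hSmin : ∀ j, j < Sw w → w j ≠ ustar := fun j hj => Nat.notMem_of_lt_sInf hj
    have hSle : Sw w ≤ s₀ := Nat.sInf_le hs₀u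
    have hSnt : ∀ j, j ≤ Sw w → w j k ≠ m := fun j hj => hs₀nt j (by omega)
    have hShigh : ∀ j, j ≤ Sw w → m < w j k := by
      intro j hj
      exact stay_high hw.1 hzk hmn j (fun j' hj' => hSnt j' (by omega))
    refine ⟨hSu, hSmin, hSnt, hShigh, ?_⟩
    by_contra hSt
    push_neg at hSt
    have hfr : w (Sw w) = w t := hw.1.frozen (Sw w) hSt
    have hueq : ustar = u := by rw [← hSu, hfr, hw.2.2]
    have hukm : u k = m := by
      have := congrFun hueq k
      rw [hustar, rr_k] at this
      omega
    apply hSnt (Sw w) le_rfl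
    rw [hSu, hustar, rr_k]
    omega
  -- class B is covered by the union over first-visit times
  have hcover : {w ∈ CS d n u z t | Bc u k m w} ⊆
      ⋃ S ∈ Finset.range t, {w ∈ CS d n u z t | Bc u k m w ∧ Sw w = S} := by
    intro w ⟨hw, hB⟩
    obtain ⟨-, -, -, -, hSlt⟩ := basic w hw hB
    simp only [Set.mem_iUnion, Finset.mem_range]
    exact ⟨Sw w, hSlt, hw, hB, rfl⟩
  have hBfin : ∀ (X : Set (ℕ → V d)), X ⊆ CS d n u z t → X.Finite :=
    fun X hX => (CS_finite hu z t).subset hX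
  refine le_trans (Set.ncard_le_ncard hcover ?_) ?_
  · apply Set.Finite.biUnion (Finset.finite_toSet _)
    intro S _
    exact hBfin _ (fun w hw => hw.1)
  refine le_trans (ncard_biUnion_le _ _ (fun S _ => hBfin _ (fun w hw => hw.1))) ?_
  refine Finset.sum_le_sum fun S hS => ?_
  rw [Finset.mem_range] at hS
  -- injection for fixed S
  show _ ≤ (NoTouchS d n u (rr k m z) k m S).ncard * (CS d n u (rr k m u) (t - S)).ncard
  rw [← ncard_prod]
  set F : (ℕ → V d) → (ℕ → V d) × (ℕ → V d) :=
    fun w => ((fun i => rr k m (w (min i S)) : ℕ → V d),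
              (fun i => w (S + min i (t - S)) : ℕ → V d)) with hF
  have hmaps : ∀ w ∈ {w ∈ CS d n u z t | Bc u k m w ∧ Sw w = S},
      F w ∈ (NoTouchS d n u (rr k m z) k m S) ×ˢ (CS d n u ustar (t - S)) := by
    rintro w ⟨hw, hB, hSeq⟩
    obtain ⟨hSu, hSmin, hSnt, hShigh, hSlt⟩ := basic w hw hB
    rw [hSeq] at hSu hSmin hSnt hShigh hSlt
    obtain ⟨hW, hc, he⟩ := hw
    rw [Set.mem_prod]
    constructor
    · -- first component in NoTouchS
      refine ⟨⟨⟨?_, ?_, ?_⟩, ?_, ?_⟩, ?_⟩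
      · show rr k m (w (min 0 S)) = rr k m z
        rw [Nat.zero_min, hW.start]
      · intro j hj
        show dist1 (rr k m (w (min (j+1) S))) (rr k m (w (min j S))) = 1
        rw [min_eq_left (by omega : j + 1 ≤ S), min_eq_left (by omega : j ≤ S), dist1_rr]
        exact hW.step j (by omega)
      · intro j hj
        show rr k m (w (min j S)) = rr k m (w (min S S))
        rw [min_eq_right hj, min_self]
      · intro j hj
        show InB d n (rr k m (w (min j S))) ∧ rr k m (w (min j S)) ≠ u
        rw [min_eq_left (by omega : j ≤ S)]
        constructor
        · exact InB_rr (hc j (by omega)).1 (hShigh j (by omega)) ha1 hmn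
        · intro hequ
          apply hSmin j hj
          rw [← rr_invol (p := w j), hequ, hustar]
      · show rr k m (w (min S S)) = u
        rw [min_self, hSu, hustar, rr_invol]
      · intro s
        show rr k m (w (min s S)) k ≠ m
        rw [rr_k]
        have := hSnt (min s S) (min_le_right _ _)
        omega
    · -- second component in CS from ustar
      refine ⟨⟨?_, ?_, ?_⟩, ?_, ?_⟩
      · show w (S + min 0 (t - S)) = ustar
        rw [Nat.zero_min, Nat.add_zero, hSu]
      · intro j hj
        show dist1 (w (S + min (j+1) (t-S))) (w (S + min j (t-S))) = 1
        rw [min_eq_left (by omega : j + 1 ≤ t - S), min_eq_left (by omega : j ≤ t - S)]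
        exact hW.step (S + j) (by omega)
      · intro j hj
        show w (S + min j (t-S)) = w (S + min (t-S) (t-S))
        rw [min_eq_right hj, min_self]
      · intro j hj
        show InB d n (w (S + min j (t-S))) ∧ w (S + min j (t-S)) ≠ u
        rw [min_eq_left (by omega : j ≤ t - S)]
        exact hc (S + j) (by omega)
      · show w (S + min (t-S) (t-S)) = u
        rw [min_self, show S + (t - S) = t by omega]
        exact he
  have hinj : Set.InjOn F {w ∈ CS d n u z t | Bc u k m w ∧ Sw w = S} := by
    rintro w1 ⟨hw1, hB1, hS1⟩ w2 ⟨hw2, hB2, hS2⟩ heq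
    have heq1 := congrArg Prod.fst heq
    have heq2 := congrArg Prod.snd heq
    simp only [hF] at heq1 heq2
    funext i
    rcases le_or_gt i S with hi | hi
    · have := congrFun heq1 i
      rw [min_eq_left hi] at this
      exact rr_inj this
    · rcases le_or_gt i t with hit | hit
      · have := congrFun heq2 (i - S)
        rw [min_eq_left (by omega : i - S ≤ t - S), show S + (i - S) = i by omega] at this
        exact this
      · have hfin := congrFun heq2 (t - S)
        rw [min_self, show S + (t - S) = t by omega] at hfin
        rw [hw1.1.frozen i (by omega), hw2.1.frozen i (by omega), hfin]
  exact Set.ncard_le_ncard_of_injOn F hmaps hinj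
    (((CS_finite hu (rr k m z) S).subset (fun w hw => hw.1)).prod (CS_finite hu ustar (t - S)))


include hu huk hz hzk ha1 hmn in
lemma reflect_pi' (hd : 0 < d) : pi' d n u z ≤ pi' d n u (rr k m z) := by
  classical
  by_cases hzs : rr k m z = u
  · rw [hzs, pi'_self hd]
    exact pi'_le_one hd hu z
  have hzstar : z ≠ rr k m u := by
    intro h
    apply hzs
    rw [h, rr_invol]
  have hcount : ∀ t, NN d n u z t ≤ (TouchS d n u (rr k m z) k m t).ncard
      + ∑ S ∈ Finset.range t,
          (NoTouchS d n u (rr k m z) k m S).ncard * NN d n u (rr k m u) (t - S) := by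
    intro t
    have hsplit : CS d n u z t =
        {w ∈ CS d n u z t | ¬ Bc u k m w} ∪ {w ∈ CS d n u z t | Bc u k m w} := by
      ext w
      simp only [Set.mem_union, Set.mem_setOf_eq]
      by_cases h : Bc u k m w <;> by_cases h2 : w ∈ CS d n u z t <;> simp [h, h2]
    have h0 : NN d n u z t ≤ {w ∈ CS d n u z t | ¬ Bc u k m w}.ncard
        + {w ∈ CS d n u z t | Bc u k m w}.ncard := by
      have h0' := Set.ncard_union_le {w ∈ CS d n u z t | ¬ Bc u k m w}
        {w ∈ CS d n u z t | Bc u k m w}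
      rw [← hsplit] at h0'
      exact h0'
    exact h0.trans (add_le_add (classA_le hu huk hz hzk ha1 hmn hzstar t)
      (classB_le hu huk hz hzk ha1 hmn t))
  set A : ℕ → ℝ≥0∞ := fun t => ((TouchS d n u (rr k m z) k m t).ncard : ℝ≥0∞) * q d ^ t with hA
  set Bq : ℕ → ℝ≥0∞ :=
    fun S => ((NoTouchS d n u (rr k m z) k m S).ncard : ℝ≥0∞) * q d ^ S with hBq
  set C : ℕ → ℝ≥0∞ := fun r => (NN d n u (rr k m u) r : ℝ≥0∞) * q d ^ r with hC
  have hterm : ∀ t, (NN d n u z t : ℝ≥0∞) * q d ^ t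
      ≤ A t + ∑ S ∈ Finset.range t, Bq S * C (t - S) := by
    intro t
    have h1 : (NN d n u z t : ℝ≥0∞) * q d ^ t
        ≤ (((TouchS d n u (rr k m z) k m t).ncard
          + ∑ S ∈ Finset.range t,
            (NoTouchS d n u (rr k m z) k m S).ncard * NN d n u (rr k m u) (t - S) : ℕ) : ℝ≥0∞)
          * q d ^ t := by
      refine mul_le_mul_left ?_ _
      exact_mod_cast hcount t
    refine h1.trans (le_of_eq ?_)
    push_cast
    rw [add_mul, Finset.sum_mul]
    congr 1
    refine Finset.sum_congr rfl fun S hS => ?_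
    rw [Finset.mem_range] at hS
    rw [hBq, hC]
    have : q d ^ t = q d ^ S * q d ^ (t - S) := by
      rw [← pow_add, show S + (t - S) = t by omega]
    rw [this]
    ring
  calc pi' d n u z ≤ ∑' t, (A t + ∑ S ∈ Finset.range t, Bq S * C (t - S)) :=
        ENNReal.tsum_le_tsum hterm
    _ = (∑' t, A t) + ∑' t, ∑ S ∈ Finset.range t, Bq S * C (t - S) := ENNReal.tsum_add
    _ ≤ (∑' t, A t) + (∑' S, Bq S) * (∑' r, C r) := add_le_add_right (tsum_cauchy_le Bq C) _
    _ ≤ (∑' t, A t) + (∑' S, Bq S) * 1 := by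
        refine add_le_add_right (mul_le_mul_right ?_ _) _
        exact pi'_le_one hd hu (rr k m u)
    _ = ∑' t, (A t + Bq t) := by rw [mul_one, ENNReal.tsum_add]
    _ = pi' d n u (rr k m z) := by
        rw [pi']
        refine tsum_congr fun t => ?_
        rw [hA, hBq, CS_partition_touch (k := k) (m := m) hu (rr k m z) t]
        push_cast
        ring
end Classes


/-! ### per-coordinate step and chaining -/

lemma dist1_update (z : V d) (k : Fin d) (a b : ℤ) :
    dist1 (Function.update z k a) (Function.update z k b) = |a - b| := by
  unfold dist1
  rw [Finset.sum_eq_single k]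
  · simp
  · intro j _ hj
    rw [Function.update_of_ne hj, Function.update_of_ne hj]
    simp
  · intro h
    exact absurd (Finset.mem_univ k) h

lemma InB_update {z : V d} (hz : InB d n z) (k : Fin d) {a : ℤ} (ha : 1 ≤ a)
    (han : a ≤ (n:ℤ)) : InB d n (Function.update z k a) := by
  intro j
  by_cases hj : j = k
  · subst hj; rw [Function.update_self]; exact ⟨ha, han⟩
  · rw [Function.update_of_ne hj]; exact hz j

lemma q_le_one (hd : 0 < d) : q d ≤ 1 := by
  rw [q]
  refine ENNReal.inv_le_one.mpr ?_
  exact_mod_cast Nat.one_le_iff_ne_zero.mpr (by omega)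

lemma reach_even {u z : V d} {k : Fin d} (hd : 0 < d) (hu : InB d n u)
    (huk2 : 2 * u k ≤ (n:ℤ) + 1) (hz : InB d n z) (hzk : z k = (n:ℤ))
    {a : ℤ} (ha : 1 ≤ a) (han : a ≤ (n:ℤ)) (hpar : (a + n) % 2 = 0) :
    pi' d n u z ≤ pi' d n u (Function.update z k a) := by
  rcases eq_or_lt_of_le han with rfl | halt
  · have : Function.update z k (z k) = z := Function.update_eq_self k z
    rw [hzk] at this
    rw [this]
  · obtain ⟨m, hm⟩ : ∃ m : ℤ, a + n = 2 * m := ⟨(a + n) / 2, by omega⟩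
    have hrr : rr k m z = Function.update z k a := by
      have hva : 2*m - z k = a := by rw [hzk]; omega
      rw [rr, hva]
    have := reflect_pi' (m := m) hu (show u k ≤ m by omega) hz hzk (show 1 ≤ 2*m - (n:ℤ) by omega) (show m < (n:ℤ) by omega) hd
    rwa [hrr] at this

lemma coord_step {u z : V d} {k : Fin d} (hd : 0 < d) (hu : InB d n u)
    (huk2 : 2 * u k ≤ (n:ℤ) + 1) (hz : InB d n z) (hzk : z k = (n:ℤ))
    {a : ℤ} (ha : 1 ≤ a) (han : a ≤ (n:ℤ)) :
    q d * pi' d n u z ≤ pi' d n u (Function.update z k a) := by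
  have hq1 : q d * pi' d n u z ≤ pi' d n u z := by
    calc q d * pi' d n u z ≤ 1 * pi' d n u z := mul_le_mul_left (q_le_one hd) _
      _ = pi' d n u z := one_mul _
  by_cases hpar : (a + n) % 2 = 0
  · exact hq1.trans (reach_even hd hu huk2 hz hzk ha han hpar)
  · -- parity mismatch: one step plus reflection
    have han' : a < (n:ℤ) := by
      rcases eq_or_lt_of_le han with rfl | h
      · exfalso; omega
      · exact h
    set x := Function.update z k a with hx
    by_cases hxu : x = u
    · rw [hxu, pi'_self hd]
      calc q d * pi' d n u z ≤ 1 * 1 :=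
        mul_le_mul' (q_le_one hd) (pi'_le_one hd hu z)
        _ = 1 := one_mul _
    · have hx1 : InB d n x := InB_update hz k ha han
      have hstep := step_pi' hu hx1 hxu (Function.update z k (a+1))
        (by rw [hx, dist1_update]; norm_num)
      have hreach : pi' d n u z ≤ pi' d n u (Function.update z k (a+1)) :=
        reach_even hd hu huk2 hz hzk (by omega) (by omega) (by omega)
      calc q d * pi' d n u z ≤ q d * pi' d n u (Function.update z k (a+1)) :=
            mul_le_mul_right hreach _
        _ ≤ pi' d n u x := hstep

lemma chain {u : V d} (hd : 0 < d) (hn : 1 ≤ n) (hu : InB d n u)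
    (hu2 : ∀ k, 2 * u k ≤ (n:ℤ) + 1) (v : V d) (hv : InB d n v) :
    (q d)^d * pi' d n u (fun _ => (n:ℤ)) ≤ pi' d n u v := by
  classical
  set zf : ℕ → V d := fun j i => if (i:ℕ) < j then v i else (n:ℤ) with hzf
  have hInB : ∀ j, InB d n (zf j) := by
    intro j i
    simp only [hzf]
    by_cases h : (i:ℕ) < j
    · rw [if_pos h]; exact hv i
    · rw [if_neg h]
      exact ⟨by exact_mod_cast hn, le_rfl⟩
  have main : ∀ j, j ≤ d → (q d)^j * pi' d n u (zf 0) ≤ pi' d n u (zf j) := by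
    intro j
    induction j with
    | zero => intro _; rw [pow_zero, one_mul]
    | succ j ih =>
      intro hj
      set k : Fin d := ⟨j, by omega⟩ with hk
      have hupd : zf (j+1) = Function.update (zf j) k (v k) := by
        funext i
        by_cases hik : i = k
        · subst hik
          rw [Function.update_self]
          simp only [hzf, hk]
          rw [if_pos (by omega)]
        · rw [Function.update_of_ne hik]
          simp only [hzf]
          have : (i:ℕ) ≠ j := by
            intro h
            exact hik (Fin.ext (by simp [hk, h]))
          by_cases h : (i:ℕ) < j
          · rw [if_pos h, if_pos (by omega)]
          · rw [if_neg h, if_neg (by omega)]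
      have hzk : zf j k = (n:ℤ) := by
        simp only [hzf, hk]
        rw [if_neg (by omega)]
      have hstep := coord_step hd hu (hu2 k) (hInB j) hzk (hv k).1 (hv k).2
      calc (q d)^(j+1) * pi' d n u (zf 0)
          = q d * ((q d)^j * pi' d n u (zf 0)) := by ring
        _ ≤ q d * pi' d n u (zf j) := mul_le_mul_right (ih (by omega)) _
        _ ≤ pi' d n u (Function.update (zf j) k (v k)) := hstep
        _ = pi' d n u (zf (j+1)) := by rw [hupd]
  have h0 : zf 0 = fun _ => (n:ℤ) := by
    funext i
    simp [hzf]
  have hdd : zf d = v := by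
    funext i
    simp only [hzf]
    rw [if_pos i.2]
  have := main d le_rfl
  rwa [h0, hdd] at this


/-! ### bridge to the original definitions -/

lemma bridge {u : V d} (hu : InB d n u) (x : V d) (t : ℕ) :
    gridHitCountD d n x u t = NN d n u x t := by
  classical
  set Ψ : (ℕ → V d) → (Fin (t+1) → V d) := fun w i => w i with hΨ
  have himg : {w : Fin (t + 1) → Fin d → ℤ | IsGridWalkD d x t w ∧
      (∀ j : Fin t, InBoxD d n (w j.castSucc) ∧ w j.castSucc ≠ u) ∧
      w (Fin.last t) = u} = Ψ '' CS d n u x t := by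
    ext w
    simp only [Set.mem_setOf_eq, Set.mem_image]
    constructor
    · rintro ⟨⟨hstart, hstep⟩, hcond, hend⟩
      set w0 : ℕ → V d := fun s => w ⟨min s t, by omega⟩ with hw0
      have hval : ∀ (s : ℕ) (hs : s ≤ t), w0 s = w ⟨s, by omega⟩ := by
        intro s hs
        have hmin : min s t = s := by omega
        simp only [hw0, hmin]
      have hvalgen : ∀ (s : ℕ) (hs : t ≤ s), w0 s = w ⟨t, by omega⟩ := by
        intro s hs
        have hmin : min s t = t := by omega
        simp only [hw0, hmin]
      refine ⟨w0, ⟨⟨?_, ?_, ?_⟩, ?_, ?_⟩, ?_⟩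
      · rw [hval 0 (by omega)]
        have e0 : (⟨0, by omega⟩ : Fin (t+1)) = 0 := Fin.ext rfl
        rw [e0]
        exact hstart
      · intro s hs
        rw [hval (s+1) (by omega), hval s (by omega)]
        exact hstep ⟨s, hs⟩
      · intro s hs
        simp only [hvalgen s hs, hvalgen t le_rfl]
      · intro s hs
        rw [hval s (by omega)]
        exact hcond ⟨s, hs⟩
      · rw [hval t le_rfl]
        exact hend
      · funext i
        show w0 (i : ℕ) = w i
        rw [hval (i:ℕ) (by omega)]
    · rintro ⟨w', ⟨hW, hc, he⟩, rfl⟩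
      refine ⟨⟨?_, ?_⟩, ?_, ?_⟩
      · exact hW.start
      · intro j
        exact hW.step j.val j.2
      · intro j
        exact hc j.val j.2
      · exact he
  have hinj : Set.InjOn Ψ (CS d n u x t) := by
    intro w1 h1 w2 h2 h
    funext s
    by_cases hs : s ≤ t
    · have := congrFun h ⟨s, by omega⟩
      simpa [hΨ] using this
    · push_neg at hs
      rw [h1.1.frozen s (by omega), h2.1.frozen s (by omega)]
      have := congrFun h ⟨t, by omega⟩
      simpa [hΨ] using this
  rw [gridHitCountD, NN, himg, Set.ncard_image_of_injOn hinj]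

lemma pot_eq {u : V d} (hd : 0 < d) (hu : InB d n u) (x : V d) :
    gridPotentialD d n u x = (pi' d n u x).toReal := by
  have hqtop : q d ≠ ⊤ := by
    rw [q]
    refine ENNReal.inv_ne_top.mpr ?_
    simp only [ne_eq, Nat.cast_eq_zero]
    omega
  rw [gridPotentialD, pi', ENNReal.tsum_toReal_eq]
  · refine tsum_congr fun t => ?_
    rw [bridge hu x t, ENNReal.toReal_mul, ENNReal.toReal_pow]
    have hq : (q d).toReal = (2 * (d:ℝ))⁻¹ := by
      rw [q, ENNReal.toReal_inv]
      norm_num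
    rw [hq]
    rw [div_eq_mul_inv, ← inv_pow]
    norm_num
  · intro t
    exact ENNReal.mul_ne_top (ENNReal.natCast_ne_top _) (ENNReal.pow_ne_top hqtop)

end

end GridPf

/-- For integers `d ≥ 2`, `n ≥ 1`, and `u ∈ B = {1,…,n}^d` with
`u_i ≤ ⌈n/2⌉` for all coordinates `i`, every `v ∈ B` satisfies
`π_u(v) ≥ (1/(2d))^d · π_u((n,…,n))`. -/
theorem potential_corner_is_min (d n : ℕ) (hd : 2 ≤ d) (hn : 1 ≤ n)
    (u : Fin d → ℤ) (hu : InBoxD d n u)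
    (hu2 : ∀ k : Fin d, u k ≤ (((n + 1) / 2 : ℕ) : ℤ))
    (v : Fin d → ℤ) (hv : InBoxD d n v) :
    gridPotentialD d n u v ≥
      (1 / (2 * (d : ℝ))) ^ d * gridPotentialD d n u (fun _ => (n : ℤ)) := by
  have hd0 : 0 < d := by omega
  have hu' : GridPf.InB d n u := hu
  have hv' : GridPf.InB d n v := hv
  have hu2' : ∀ k : Fin d, 2 * u k ≤ (n:ℤ) + 1 := by
    intro k
    have h1 := hu2 k
    have h2 : (((n + 1) / 2 : ℕ) : ℤ) * 2 ≤ (n : ℤ) + 1 := by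
      exact_mod_cast (by omega : ((n+1)/2) * 2 ≤ n + 1)
    linarith
  have hchain := GridPf.chain hd0 hn hu' hu2' v hv'
  rw [ge_iff_le, GridPf.pot_eq hd0 hu' v, GridPf.pot_eq hd0 hu' (fun _ => (n:ℤ))]
  have hfin : GridPf.pi' d n u v ≠ ⊤ :=
    (lt_of_le_of_lt (GridPf.pi'_le_one hd0 hu' v) ENNReal.one_lt_top).ne
  have h1 := ENNReal.toReal_mono hfin hchain
  rw [ENNReal.toReal_mul, ENNReal.toReal_pow] at h1
  have hq : (GridPf.q d).toReal = 1 / (2 * (d:ℝ)) := by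
    rw [GridPf.q, ENNReal.toReal_inv]
    norm_num
  rw [hq] at h1
  exact h1
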